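/- Let Y be a complex 3×3 matrix with SVD Y = U_L · diag(y₁, y₂, y₃) · U_R†, 0 ≤ y₁ ≤ y₂ ≤ y₃, y₃² > 2y₂², and let α index a longest row of Y. Then (|U_{L,α1}|² + |U_{L,α2}|²)/|U_{L,α3}|² ≤ X, where X = (2y₃² − y₂²)/(y₃² − 2y₂²). In particular U_{L,α3} ≠ 0. -/
import Mathlib


open Matrix

/-- Lemma 1, second inequality: for the longest row α of Y,
`(|U_{L,α1}|² + |U_{L,α2}|²)/|U_{L,α3}|² ≤ X`, and in particular `U_{L,α3} ≠ 0`. -/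
theorem longest_row_component_ratio_upper_bound
    (Y U_L U_R : Matrix (Fin 3) (Fin 3) ℂ) (y : Fin 3 → ℝ) (α : Fin 3)
    (hUL : U_L ∈ Matrix.unitaryGroup (Fin 3) ℂ)
    (hUR : U_R ∈ Matrix.unitaryGroup (Fin 3) ℂ)
    (hy0 : 0 ≤ y 0) (h01 : y 0 ≤ y 1) (h12 : y 1 ≤ y 2)
    (hgap : 2 * (y 1)^2 < (y 2)^2)
    (hSVD : Y = U_L * Matrix.diagonal (fun i => (y i : ℂ)) * U_Rᴴ)
    (hα : ∀ j, ∑ k, ‖Y j k‖^2 ≤ ∑ k, ‖Y α k‖^2) :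
    (‖U_L α 0‖^2 + ‖U_L α 1‖^2) / ‖U_L α 2‖^2
      ≤ (2 * (y 2)^2 - (y 1)^2) / ((y 2)^2 - 2 * (y 1)^2) ∧
    U_L α 2 ≠ 0 := by
  -- Step 1: Y * Yᴴ = U_L * diagonal (y²) * U_Lᴴ
  have hURu : U_Rᴴ * U_R = 1 := by
    simpa [Matrix.star_eq_conjTranspose] using hUR.1
  have hYY : Y * Yᴴ = U_L * Matrix.diagonal (fun i => ((y i)^2 : ℂ)) * U_Lᴴ := by
    rw [hSVD, Matrix.conjTranspose_mul, Matrix.conjTranspose_mul,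
      Matrix.conjTranspose_conjTranspose]
    simp only [← Matrix.mul_assoc]
    rw [Matrix.mul_assoc (U_L * Matrix.diagonal (fun i => (y i : ℂ))) U_Rᴴ U_R,
      hURu, mul_one,
      Matrix.mul_assoc U_L, Matrix.diagonal_conjTranspose,
      Matrix.diagonal_mul_diagonal]
    congr 2
    ext i
    simp [sq]
  -- Step 2: the squared row norms of Y in terms of U_L
  have hrow : ∀ j, ∑ k, ‖Y j k‖^2 = ∑ i, (y i)^2 * ‖U_L j i‖^2 := by
    intro j
    have h := congrFun (congrFun hYY j) j
    have hL : (Y * Yᴴ) j j = ((∑ k, ‖Y j k‖^2 : ℝ) : ℂ) := by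
      rw [Matrix.mul_apply]
      push_cast
      refine Finset.sum_congr rfl fun k _ => ?_
      rw [Matrix.conjTranspose_apply]
      exact RCLike.mul_conj _
    have hR : (U_L * Matrix.diagonal (fun i => ((y i)^2 : ℂ)) * U_Lᴴ) j j
        = ((∑ i, (y i)^2 * ‖U_L j i‖^2 : ℝ) : ℂ) := by
      rw [Matrix.mul_apply]
      push_cast
      refine Finset.sum_congr rfl fun i _ => ?_
      rw [Matrix.mul_diagonal, Matrix.conjTranspose_apply, mul_assoc, mul_left_comm,
        show (star (U_L j i)) = (starRingEnd ℂ) (U_L j i) from rfl, RCLike.mul_conj]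
      rfl
    rw [hL, hR] at h
    exact_mod_cast h
  -- Step 3: rows and columns of U_L have unit norm
  have h1 : U_L * U_Lᴴ = 1 := by simpa [Matrix.star_eq_conjTranspose] using hUL.2
  have h2 : U_Lᴴ * U_L = 1 := by simpa [Matrix.star_eq_conjTranspose] using hUL.1
  have hrowU : ∀ j : Fin 3, ∑ i, ‖U_L j i‖^2 = 1 := by
    intro j
    have e1 := congrFun (congrFun h1 j) j
    rw [Matrix.mul_apply] at e1
    simp only [Matrix.one_apply_eq] at e1
    have : ((∑ i, ‖U_L j i‖^2 : ℝ) : ℂ) = 1 := by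
      rw [← e1]
      push_cast
      refine Finset.sum_congr rfl fun i _ => ?_
      rw [Matrix.conjTranspose_apply,
        show (star (U_L j i)) = (starRingEnd ℂ) (U_L j i) from rfl]
      exact (RCLike.mul_conj _).symm
    exact_mod_cast this
  have hcolU : ∀ i : Fin 3, ∑ k, ‖U_L k i‖^2 = 1 := by
    intro i
    have e2 := congrFun (congrFun h2 i) i
    rw [Matrix.mul_apply] at e2
    simp only [Matrix.one_apply_eq] at e2
    have : ((∑ k, ‖U_L k i‖^2 : ℝ) : ℂ) = 1 := by
      rw [← e2]
      push_cast
      refine Finset.sum_congr rfl fun k _ => ?_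
      rw [Matrix.conjTranspose_apply,
        show (star (U_L k i)) = (starRingEnd ℂ) (U_L k i) from rfl]
      exact (RCLike.conj_mul _).symm
    exact_mod_cast this
  -- abbreviations
  set a0 := ‖U_L α 0‖^2 with ha0
  set a1 := ‖U_L α 1‖^2 with ha1
  set a2 := ‖U_L α 2‖^2 with ha2
  have ha0n : 0 ≤ a0 := sq_nonneg _
  have ha1n : 0 ≤ a1 := sq_nonneg _
  have ha2n : 0 ≤ a2 := sq_nonneg _
  have hsum : a0 + a1 + a2 = 1 := by
    have := hrowU α
    rwa [Fin.sum_univ_three] at this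
  -- Step 4: the averaging argument
  have htot : ∑ j, ∑ k, ‖Y j k‖^2 = (y 0)^2 + (y 1)^2 + (y 2)^2 := by
    calc ∑ j, ∑ k, ‖Y j k‖^2 = ∑ j, ∑ i, (y i)^2 * ‖U_L j i‖^2 := by
          exact Finset.sum_congr rfl fun j _ => hrow j
      _ = ∑ i, (y i)^2 * ∑ j, ‖U_L j i‖^2 := by
          rw [Finset.sum_comm]
          exact Finset.sum_congr rfl fun i _ => (Finset.mul_sum _ _ _).symm
      _ = ∑ i : Fin 3, (y i)^2 := by
          refine Finset.sum_congr rfl fun i _ => ?_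
          rw [hcolU i, mul_one]
      _ = (y 0)^2 + (y 1)^2 + (y 2)^2 := by rw [Fin.sum_univ_three]
  have hav : (y 0)^2 + (y 1)^2 + (y 2)^2 ≤ 3 * ∑ k, ‖Y α k‖^2 := by
    rw [← htot]
    calc ∑ j, ∑ k, ‖Y j k‖^2 ≤ ∑ _j : Fin 3, ∑ k, ‖Y α k‖^2 :=
          Finset.sum_le_sum fun j _ => hα j
      _ = 3 * ∑ k, ‖Y α k‖^2 := by
          rw [Finset.sum_const, Finset.card_univ, Fintype.card_fin]
          ring
  have hSα : ∑ k, ‖Y α k‖^2 = (y 0)^2 * a0 + (y 1)^2 * a1 + (y 2)^2 * a2 := by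
    rw [hrow α, Fin.sum_univ_three]
  -- key inequality: a2 is not too small
  have hkey : (y 2)^2 - 2 * (y 1)^2 ≤ 3 * ((y 2)^2 - (y 1)^2) * a2 := by
    have hy01 : (y 0)^2 ≤ (y 1)^2 := by nlinarith
    nlinarith [hav, hSα, hsum, sq_nonneg (y 0)]
  have hc : 0 < (y 2)^2 - 2 * (y 1)^2 := by linarith
  have ha2pos : 0 < a2 := by nlinarith
  constructor
  · rw [div_le_div_iff₀ ha2pos hc]
    nlinarith [hkey, hsum]
  · intro h
    rw [h] at ha2
    simp at ha2
    rw [ha2] at ha2pos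
    exact lt_irrefl 0 ha2pos
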